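/- A matrix A = [[a,b],[c,d]] ∈ Mat₂(Cl(V)) satisfies A A̅ ∈ ℝ^× (where A̅ is the Clifford conjugation via the identification with Cl(V ⊕ ℝ^{1,1})) if and only if a b~ = b a~, c d~ = d c~, and the pseudo-determinant Δ(A) = a d~ - b c~ is a nonzero real number; in that case A A̅ = Δ(A)·I. -/
import Mathlib


open CliffordAlgebra

/-- for `A = [[a,b],[c,d]]` over `Cl(V)` (convention `v² = -Q v`,
`Q` non-degenerate), `A A̅ ∈ ℝˣ` — where `A̅ = [[d~,-b~],[-c~,a~]]` is the Clifford
conjugation under `Cl(V ⊕ ℝ^{1,1}) ≅ Mat₂(Cl(V))` — iff `a b~ = b a~`,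
`c d~ = d c~`, and `Δ(A) = a d~ - b c~` is a nonzero real number; in that case
`A A̅ = Δ(A)·I`. -/
theorem matrix_conj_real_iff (V : Type*) [AddCommGroup V] [Module ℝ V]
    (Q : QuadraticForm ℝ V)
    (hQnd : ∀ w : V, (∀ u : V, QuadraticMap.polar Q w u = 0) → w = 0)
    (a b c d : CliffordAlgebra (-Q)) :
    ((∃ r : ℝ, r ≠ 0 ∧
        (!![a, b; c, d] : Matrix (Fin 2) (Fin 2) (CliffordAlgebra (-Q))) *
          !![reverse d, -reverse b; -reverse c, reverse a] =
        algebraMap ℝ (Matrix (Fin 2) (Fin 2) (CliffordAlgebra (-Q))) r) ↔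
      (a * reverse b = b * reverse a ∧ c * reverse d = d * reverse c ∧
        ∃ r : ℝ, r ≠ 0 ∧ a * reverse d - b * reverse c = algebraMap ℝ _ r)) ∧
    ((∃ r : ℝ, r ≠ 0 ∧
        (!![a, b; c, d] : Matrix (Fin 2) (Fin 2) (CliffordAlgebra (-Q))) *
          !![reverse d, -reverse b; -reverse c, reverse a] =
        algebraMap ℝ (Matrix (Fin 2) (Fin 2) (CliffordAlgebra (-Q))) r) →
      (!![a, b; c, d] : Matrix (Fin 2) (Fin 2) (CliffordAlgebra (-Q))) *
          !![reverse d, -reverse b; -reverse c, reverse a] =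
        Matrix.scalar (Fin 2) (a * reverse d - b * reverse c)) := by
  have hprod : (!![a, b; c, d] : Matrix (Fin 2) (Fin 2) (CliffordAlgebra (-Q))) *
      !![reverse d, -reverse b; -reverse c, reverse a] =
      !![a * reverse d + b * -reverse c, a * -reverse b + b * reverse a;
         c * reverse d + d * -reverse c, c * -reverse b + d * reverse a] :=
    Matrix.mul_fin_two _ _ _ _ _ _ _ _
  have halg : ∀ r : ℝ, algebraMap ℝ (Matrix (Fin 2) (Fin 2) (CliffordAlgebra (-Q))) r =
      !![algebraMap ℝ _ r, 0; 0, algebraMap ℝ _ r] := by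
    intro r
    rw [Matrix.algebraMap_eq_diagonal]
    ext i j
    fin_cases i <;> fin_cases j <;>
      simp [Matrix.diagonal, Pi.algebraMap_apply]
  have key : ∀ r : ℝ,
      ((!![a, b; c, d] : Matrix (Fin 2) (Fin 2) (CliffordAlgebra (-Q))) *
          !![reverse d, -reverse b; -reverse c, reverse a] =
        algebraMap ℝ (Matrix (Fin 2) (Fin 2) (CliffordAlgebra (-Q))) r) ↔
      (a * reverse b = b * reverse a ∧ c * reverse d = d * reverse c ∧
        a * reverse d - b * reverse c = algebraMap ℝ _ r) := by
    intro r
    rw [hprod, halg]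
    constructor
    · intro h
      have h00 := congrFun (congrFun (congrArg Matrix.of.symm h) 0) 0
      have h01 := congrFun (congrFun (congrArg Matrix.of.symm h) 0) 1
      have h10 := congrFun (congrFun (congrArg Matrix.of.symm h) 1) 0
      simp only [Matrix.cons_val', Matrix.cons_val_zero, Matrix.cons_val_one, Matrix.head_cons,
        Matrix.head_fin_const, Matrix.empty_val', Matrix.cons_val_fin_one,
        Matrix.of_symm_apply] at h00 h01 h10
      refine ⟨?_, ?_, ?_⟩
      · have : a * -reverse b + b * reverse a = 0 := by
          simpa using h01
        rw [mul_neg, neg_add_eq_zero] at this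
        exact this
      · have : c * reverse d + d * -reverse c = 0 := by
          simpa using h10
        rw [mul_neg, add_neg_eq_zero] at this
        exact this
      · have : a * reverse d + b * -reverse c = algebraMap ℝ _ r := by
          simpa using h00
        rwa [mul_neg, ← sub_eq_add_neg] at this
    · rintro ⟨h1, h2, h3⟩
      have h4 : d * reverse a - c * reverse b = algebraMap ℝ _ r := by
        have := congrArg (reverse (Q := -Q)) h3
        rwa [map_sub, reverse.map_mul, reverse.map_mul, reverse_reverse, reverse_reverse,
          reverse.commutes] at this
      have e1 : a * reverse d + b * -reverse c = algebraMap ℝ (CliffordAlgebra (-Q)) r := by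
        rw [mul_neg, ← sub_eq_add_neg]; exact h3
      have e2 : a * -reverse b + b * reverse a = 0 := by
        rw [mul_neg, h1, neg_add_cancel]
      have e3 : c * reverse d + d * -reverse c = 0 := by
        rw [mul_neg, h2, add_neg_cancel]
      have e4 : c * -reverse b + d * reverse a = algebraMap ℝ (CliffordAlgebra (-Q)) r := by
        rw [mul_neg, neg_add_eq_sub]; exact h4
      rw [e1, e2, e3, e4]
  constructor
  · constructor
    · rintro ⟨r, hr, h⟩
      obtain ⟨h1, h2, h3⟩ := (key r).mp h
      exact ⟨h1, h2, r, hr, h3⟩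
    · rintro ⟨h1, h2, r, hr, h3⟩
      exact ⟨r, hr, (key r).mpr ⟨h1, h2, h3⟩⟩
  · rintro ⟨r, hr, h⟩
    obtain ⟨_, _, h3⟩ := (key r).mp h
    rw [h, h3, Matrix.scalar_apply, Matrix.algebraMap_eq_diagonal]
    rfl
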